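/- Let X and Y be real p×n matrices. Then tr(((X Xᵀ − Y Yᵀ)²)^{1/2}) ≤ tr((X − Y)(X − Y)ᵀ) + 2·tr(((X − Y) Yᵀ Y (X − Y)ᵀ)^{1/2}); that is, the sum of the singular values of X Xᵀ − Y Yᵀ is at most the sum of the singular values of (X − Y)(X − Y)ᵀ plus twice the sum of the singular values of (X − Y) Yᵀ. -/

import Mathlib

open Matrix
open scoped Matrix.Norms.L2Operator

/-- The positive semidefinite square root of a real matrix (zero junk value when the matrix
is not positive semidefinite). -/
noncomputable def matSqrt {n : Type*} [Fintype n] [DecidableEq n]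
    (A : Matrix n n ℝ) : Matrix n n ℝ :=
  letI := Classical.propDecidable
  if h : A.PosSemidef then
    (h.1.eigenvectorUnitary : Matrix n n ℝ) * diagonal ((↑) ∘ Real.sqrt ∘ h.1.eigenvalues) *
      (star h.1.eigenvectorUnitary : Matrix n n ℝ) else 0

/-- `A^{−1/2}`: the inverse of the positive semidefinite square root. -/
noncomputable def matInvSqrt {n : Type*} [Fintype n] [DecidableEq n]
    (A : Matrix n n ℝ) : Matrix n n ℝ :=
  (matSqrt A)⁻¹

section Aux

set_option linter.unusedSectionVars false

variable {m : Type*} [Fintype m] [DecidableEq m]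

private lemma sign_sq_le_one' (x : ℝ) : Real.sign x * Real.sign x ≤ 1 := by
  rcases lt_trichotomy x 0 with h|h|h
  · rw [Real.sign_of_neg h]; norm_num
  · rw [h, Real.sign_zero]; norm_num
  · rw [Real.sign_of_pos h]; norm_num

private lemma self_mul_sign' (x : ℝ) : x * Real.sign x = |x| := by
  rcases lt_trichotomy x 0 with h|h|h
  · rw [Real.sign_of_neg h, abs_of_neg h]; ring
  · simp [h]
  · rw [Real.sign_of_pos h, abs_of_pos h]; ring

private lemma trace_nonneg_of_posSemidef' {A : Matrix m m ℝ} (hA : A.PosSemidef) :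
    0 ≤ A.trace := by
  rw [Matrix.trace]
  refine Finset.sum_nonneg fun i _ => ?_
  have := hA.dotProduct_mulVec_nonneg (Pi.single i 1)
  simpa [dotProduct, Matrix.mulVec, Pi.single_apply] using this

private lemma stepA' {n' : Type*} [Fintype n'] [DecidableEq n'] (C : Matrix n' m ℝ)
    (U : Matrix m m ℝ) (hU : (1 - U).PosSemidef) : (Cᵀ * C * U).trace ≤ (Cᵀ * C).trace := by
  have h1 : (C * (1 - U) * Cᵀ).PosSemidef := by
    have := hU.mul_mul_conjTranspose_same C
    rwa [conjTranspose_eq_transpose_of_trivial] at this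
  have h2 := trace_nonneg_of_posSemidef' h1
  have h3 : (C * (1 - U) * Cᵀ).trace = (Cᵀ * C).trace - (Cᵀ * C * U).trace := by
    rw [Matrix.mul_sub, Matrix.mul_one, Matrix.sub_mul, trace_sub, trace_mul_comm C Cᵀ,
      Matrix.trace_mul_cycle C U Cᵀ]
  linarith

private lemma conjmul' (V : Matrix m m ℝ) (hV1 : Vᵀ * V = 1) (f g : m → ℝ) :
    (V * diagonal f * Vᵀ) * (V * diagonal g * Vᵀ) = V * diagonal (fun i => f i * g i) * Vᵀ := by
  calc (V * diagonal f * Vᵀ) * (V * diagonal g * Vᵀ)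
      = V * diagonal f * (Vᵀ * V) * diagonal g * Vᵀ := by simp only [Matrix.mul_assoc]
    _ = V * diagonal (fun i => f i * g i) * Vᵀ := by
        rw [hV1, Matrix.mul_one, Matrix.mul_assoc V, diagonal_mul_diagonal]

private lemma conjpsd' (V : Matrix m m ℝ) (f : m → ℝ) (hf : ∀ i, 0 ≤ f i) :
    (V * diagonal f * Vᵀ).PosSemidef := by
  have h : (diagonal f).PosSemidef := posSemidef_diagonal_iff.mpr hf
  have := h.mul_mul_conjTranspose_same V
  rwa [conjTranspose_eq_transpose_of_trivial] at this

private lemma matSqrt_spec' (A : Matrix m m ℝ) (hA : A.PosSemidef) :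
    matSqrt A * matSqrt A = A ∧ (matSqrt A).PosSemidef := by
  set V : Matrix m m ℝ := (hA.1.eigenvectorUnitary : Matrix m m ℝ) with hVdef
  set ev : m → ℝ := hA.1.eigenvalues with hevdef
  have hV1 : Vᵀ * V = 1 := by
    have := Matrix.mem_unitaryGroup_iff'.mp hA.1.eigenvectorUnitary.2
    rwa [star_eq_conjTranspose, conjTranspose_eq_transpose_of_trivial] at this
  have hspec : A = V * diagonal ev * Vᵀ := by
    have := hA.1.spectral_theorem
    rwa [Unitary.conjStarAlgAut_apply, star_eq_conjTranspose, conjTranspose_eq_transpose_of_trivial,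
      RCLike.ofReal_real_eq_id, Function.id_comp] at this
  have hsq : matSqrt A = V * diagonal (fun i => Real.sqrt (ev i)) * Vᵀ := by
    unfold matSqrt
    rw [dif_pos hA]
    simp only [star_eq_conjTranspose, conjTranspose_eq_transpose_of_trivial]
    congr!
  rw [hsq, conjmul' V hV1]
  refine ⟨?_, conjpsd' _ _ fun i => Real.sqrt_nonneg _⟩
  have hf : (fun i => Real.sqrt (ev i) * Real.sqrt (ev i)) = ev := by
    funext i; exact Real.mul_self_sqrt (hA.eigenvalues_nonneg i)
  rw [hf, ← hspec]

open scoped MatrixOrder in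
private lemma psd_sqrt_unique' (A B C : Matrix m m ℝ) (hB : B.PosSemidef) (hC : C.PosSemidef)
    (hB2 : B * B = A) (hC2 : C * C = A) : B = C := by
  rw [← CFC.sqrt_unique hB2 (nonneg_iff_posSemidef.mpr hB),
    CFC.sqrt_unique hC2 (nonneg_iff_posSemidef.mpr hC)]

private lemma key_abs' (S : Matrix m m ℝ) (hS : S.IsHermitian) :
    ∃ U : Matrix m m ℝ, Uᵀ = U ∧ (1 - U).PosSemidef ∧ (1 - U * U).PosSemidef ∧
      (S * U).PosSemidef ∧ (S * U) * (S * U) = S * S := by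
  set V : Matrix m m ℝ := (hS.eigenvectorUnitary : Matrix m m ℝ) with hVdef
  set ev : m → ℝ := hS.eigenvalues with hevdef
  have hV1 : Vᵀ * V = 1 := by
    have := Matrix.mem_unitaryGroup_iff'.mp hS.eigenvectorUnitary.2
    rwa [star_eq_conjTranspose, conjTranspose_eq_transpose_of_trivial] at this
  have hV2 : V * Vᵀ = 1 := by
    have := Matrix.mem_unitaryGroup_iff.mp hS.eigenvectorUnitary.2
    rwa [star_eq_conjTranspose, conjTranspose_eq_transpose_of_trivial] at this
  have hspec : S = V * diagonal ev * Vᵀ := by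
    have := hS.spectral_theorem
    rwa [Unitary.conjStarAlgAut_apply, star_eq_conjTranspose, conjTranspose_eq_transpose_of_trivial,
      RCLike.ofReal_real_eq_id, Function.id_comp] at this
  refine ⟨V * diagonal (fun i => Real.sign (ev i)) * Vᵀ, ?_, ?_, ?_, ?_, ?_⟩
  · simp [transpose_mul, Matrix.mul_assoc, diagonal_transpose]
  · have h1 : (1 : Matrix m m ℝ) = V * diagonal (fun _ => (1:ℝ)) * Vᵀ := by
      simp [diagonal_one, hV2]
    rw [h1, ← Matrix.sub_mul, ← Matrix.mul_sub, diagonal_sub]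
    exact conjpsd' _ _ fun i => by
      rcases lt_trichotomy (ev i) 0 with h|h|h
      · rw [Real.sign_of_neg h]; norm_num
      · simp [h]
      · rw [Real.sign_of_pos h]; norm_num
  · have h1 : (1 : Matrix m m ℝ) = V * diagonal (fun _ => (1:ℝ)) * Vᵀ := by
      simp [diagonal_one, hV2]
    rw [conjmul' V hV1, h1, ← Matrix.sub_mul, ← Matrix.mul_sub, diagonal_sub]
    exact conjpsd' _ _ fun i => by simpa using sign_sq_le_one' (ev i)
  · rw [hspec, conjmul' V hV1]
    exact conjpsd' _ _ fun i => by rw [self_mul_sign']; exact abs_nonneg _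
  · rw [hspec, conjmul' V hV1, conjmul' V hV1, conjmul' V hV1]
    have h2 : (fun i => ev i * Real.sign (ev i) * (ev i * Real.sign (ev i)))
        = fun i => ev i * ev i := by
      funext i
      rw [self_mul_sign', abs_mul_abs_self]
    rw [h2]

private lemma conj_diag' (W M : Matrix m m ℝ) (i : m) :
    (Wᵀ * M * W) i i = Wᵀ i ⬝ᵥ M *ᵥ Wᵀ i := by
  simp only [mul_apply, dotProduct, mulVec, transpose_apply, Finset.sum_mul, Finset.mul_sum]
  rw [Finset.sum_comm]
  refine Finset.sum_congr rfl fun j _ => Finset.sum_congr rfl fun k _ => by ring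

private lemma dotProduct_le_sqrt' (a b : m → ℝ) :
    a ⬝ᵥ b ≤ Real.sqrt (a ⬝ᵥ a) * Real.sqrt (b ⬝ᵥ b) := by
  have h := Finset.sum_mul_sq_le_sq_mul_sq Finset.univ a b
  have h2 : a ⬝ᵥ b ≤ |a ⬝ᵥ b| := le_abs_self _
  have h3 : |a ⬝ᵥ b| = Real.sqrt ((a ⬝ᵥ b) ^ 2) := (Real.sqrt_sq_eq_abs _).symm
  have ha : 0 ≤ a ⬝ᵥ a := Finset.sum_nonneg fun i _ => mul_self_nonneg _
  refine h2.trans (h3 ▸ ?_)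
  rw [← Real.sqrt_mul ha]
  apply Real.sqrt_le_sqrt
  simpa [dotProduct, pow_two] using h

private lemma dot_shift' (A : Matrix m m ℝ) (x y : m → ℝ) :
    x ⬝ᵥ A *ᵥ y = (Aᵀ *ᵥ x) ⬝ᵥ y := by
  rw [dotProduct_mulVec, ← mulVec_transpose]

private lemma stepB' (B U : Matrix m m ℝ) (hUt : Uᵀ = U) (hU2 : (1 - U * U).PosSemidef) :
    (B * U).trace ≤ (matSqrt (B * Bᵀ)).trace := by
  have hBB : (B * Bᵀ).PosSemidef := by
    have := posSemidef_self_mul_conjTranspose B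
    rwa [conjTranspose_eq_transpose_of_trivial] at this
  set W : Matrix m m ℝ := (hBB.1.eigenvectorUnitary : Matrix m m ℝ) with hWdef
  set μ : m → ℝ := hBB.1.eigenvalues with hμdef
  have hW1 : Wᵀ * W = 1 := by
    have := Matrix.mem_unitaryGroup_iff'.mp hBB.1.eigenvectorUnitary.2
    rwa [star_eq_conjTranspose, conjTranspose_eq_transpose_of_trivial] at this
  have hW2 : W * Wᵀ = 1 := by
    have := Matrix.mem_unitaryGroup_iff.mp hBB.1.eigenvectorUnitary.2
    rwa [star_eq_conjTranspose, conjTranspose_eq_transpose_of_trivial] at this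
  have hspec : B * Bᵀ = W * diagonal μ * Wᵀ := by
    have := hBB.1.spectral_theorem
    rwa [Unitary.conjStarAlgAut_apply, star_eq_conjTranspose, conjTranspose_eq_transpose_of_trivial,
      RCLike.ofReal_real_eq_id, Function.id_comp] at this
  have hdiag : Wᵀ * (B * Bᵀ) * W = diagonal μ := by
    have := hBB.1.conjStarAlgAut_star_eigenvectorUnitary
    simp only [Unitary.conjStarAlgAut_apply, Unitary.coe_star, star_star, star_eq_conjTranspose,
      conjTranspose_eq_transpose_of_trivial, RCLike.ofReal_real_eq_id, Function.id_comp] at this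
    exact this
  have hμ0 : ∀ i, 0 ≤ μ i := fun i => hBB.eigenvalues_nonneg i
  have hsq : matSqrt (B * Bᵀ) = W * diagonal (fun i => Real.sqrt (μ i)) * Wᵀ := by
    unfold matSqrt
    rw [dif_pos hBB]
    simp only [star_eq_conjTranspose, conjTranspose_eq_transpose_of_trivial]
    congr!
  have hrhs : (matSqrt (B * Bᵀ)).trace = ∑ i, Real.sqrt (μ i) := by
    rw [hsq, Matrix.trace_mul_cycle, hW1, Matrix.one_mul, trace_diagonal]
  have hlhs : (B * U).trace = (Wᵀ * (B * U) * W).trace := by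
    rw [Matrix.trace_mul_cycle Wᵀ (B * U) W, hW2, Matrix.one_mul]
  rw [hlhs, hrhs, Matrix.trace]
  apply Finset.sum_le_sum
  intro i _
  set w : m → ℝ := Wᵀ i with hw
  have hterm : (Wᵀ * (B * U) * W) i i = (Bᵀ *ᵥ w) ⬝ᵥ (U *ᵥ w) := by
    rw [conj_diag', ← mulVec_mulVec, dot_shift']
  have ha : (Bᵀ *ᵥ w) ⬝ᵥ (Bᵀ *ᵥ w) = μ i := by
    have h3 : w ⬝ᵥ (B * Bᵀ) *ᵥ w = (Bᵀ *ᵥ w) ⬝ᵥ (Bᵀ *ᵥ w) := by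
      rw [← mulVec_mulVec, dot_shift']
    rw [← h3, ← conj_diag', hdiag, diagonal_apply_eq]
  have hww : w ⬝ᵥ w = 1 := by
    have h4 : w ⬝ᵥ w = (Wᵀ * W) i i := by simp [mul_apply, dotProduct, hw]
    rw [h4, hW1, one_apply_eq]
  have hb : (U *ᵥ w) ⬝ᵥ (U *ᵥ w) ≤ 1 := by
    have h0 := hU2.dotProduct_mulVec_nonneg w
    have hs : star w = w := by ext j; simp
    rw [hs, Matrix.sub_mulVec, Matrix.one_mulVec, dotProduct_sub] at h0
    have h5 : w ⬝ᵥ (U * U) *ᵥ w = (U *ᵥ w) ⬝ᵥ (U *ᵥ w) := by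
      rw [← mulVec_mulVec, dot_shift', hUt]
    rw [← h5]
    linarith
  calc (Wᵀ * (B * U) * W) i i
      ≤ Real.sqrt ((Bᵀ *ᵥ w) ⬝ᵥ (Bᵀ *ᵥ w)) * Real.sqrt ((U *ᵥ w) ⬝ᵥ (U *ᵥ w)) := by
        rw [hterm]; exact dotProduct_le_sqrt' _ _
    _ ≤ Real.sqrt (μ i) * 1 := by
        rw [ha]
        have h6 := Real.sqrt_le_sqrt hb
        rw [Real.sqrt_one] at h6
        exact mul_le_mul_of_nonneg_left h6 (Real.sqrt_nonneg _)
    _ = Real.sqrt (μ i) := mul_one _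

end Aux

/-- For real `p×n` matrices `X, Y`, the nuclear norm of `X Xᵀ − Y Yᵀ`
is bounded by the nuclear norm of `(X − Y)(X − Y)ᵀ` plus twice the nuclear norm of
`(X − Y) Yᵀ`:
`tr(((X Xᵀ − Y Yᵀ)²)^{1/2}) ≤ tr((X − Y)(X − Y)ᵀ) + 2·tr(((X − Y) Yᵀ Y (X − Y)ᵀ)^{1/2})`. -/
theorem nuclear_norm_gram_difference_bound
    (p n : ℕ) (X Y : Matrix (Fin p) (Fin n) ℝ) :
    (matSqrt ((X * Xᵀ - Y * Yᵀ) * (X * Xᵀ - Y * Yᵀ))).trace ≤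
      ((X - Y) * (X - Y)ᵀ).trace + 2 * (matSqrt ((X - Y) * Yᵀ * Y * (X - Y)ᵀ)).trace := by
  have hS : (X * Xᵀ - Y * Yᵀ).IsHermitian := by
    have h1 := isHermitian_mul_conjTranspose_self X
    have h2 := isHermitian_mul_conjTranspose_self Y
    rw [conjTranspose_eq_transpose_of_trivial] at h1 h2
    exact h1.sub h2
  obtain ⟨U, hUt, hU1, hU2, hSU, hSUsq⟩ := key_abs' (X * Xᵀ - Y * Yᵀ) hS
  -- LHS equals trace of S * U
  have hL : matSqrt ((X * Xᵀ - Y * Yᵀ) * (X * Xᵀ - Y * Yᵀ)) = (X * Xᵀ - Y * Yᵀ) * U := by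
    have hSS : ((X * Xᵀ - Y * Yᵀ) * (X * Xᵀ - Y * Yᵀ)).PosSemidef := by
      have := posSemidef_conjTranspose_mul_self (X * Xᵀ - Y * Yᵀ)
      rwa [hS] at this
    obtain ⟨h1, h2⟩ := matSqrt_spec' _ hSS
    exact psd_sqrt_unique' _ _ _ h2 hSU h1 hSUsq
  -- decomposition S = A + B + Bᵀ
  have hdecomp : X * Xᵀ - Y * Yᵀ
      = (X - Y) * (X - Y)ᵀ + (X - Y) * Yᵀ + ((X - Y) * Yᵀ)ᵀ := by
    simp only [transpose_sub, transpose_mul, transpose_transpose, Matrix.sub_mul,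
      Matrix.mul_sub]
    abel
  -- bound for the A part
  have hA1 : ((X - Y) * (X - Y)ᵀ * U).trace ≤ ((X - Y) * (X - Y)ᵀ).trace := by
    have := stepA' (X - Y)ᵀ U hU1
    rwa [transpose_transpose] at this
  -- bound for the B part
  have hB1 : ((X - Y) * Yᵀ * U).trace ≤ (matSqrt ((X - Y) * Yᵀ * Y * (X - Y)ᵀ)).trace := by
    have hBBt : (X - Y) * Yᵀ * ((X - Y) * Yᵀ)ᵀ = (X - Y) * Yᵀ * Y * (X - Y)ᵀ := by
      rw [transpose_mul, transpose_transpose, ← Matrix.mul_assoc]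
    have := stepB' ((X - Y) * Yᵀ) U hUt hU2
    rwa [hBBt] at this
  -- transpose part has the same trace
  have hB2 : (((X - Y) * Yᵀ)ᵀ * U).trace = ((X - Y) * Yᵀ * U).trace := by
    conv_lhs => rw [← trace_transpose]
    rw [transpose_mul, transpose_transpose, hUt, trace_mul_comm]
  have hsplit : ((X * Xᵀ - Y * Yᵀ) * U).trace
      = ((X - Y) * (X - Y)ᵀ * U).trace + ((X - Y) * Yᵀ * U).trace
        + (((X - Y) * Yᵀ)ᵀ * U).trace := by
    rw [hdecomp, Matrix.add_mul, Matrix.add_mul, trace_add, trace_add]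
  rw [hL, hsplit, hB2]
  linarith
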